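/- arXiv:2405.07073 — 2 statements merged into one kernel-verified Lean document; each statement's English description precedes it below -/
import Mathlib

section
/- Let E be a vector lattice (Riesz space) over the reals and let A ⊆ E be a solid set. Then the balanced convex hull Conv_b(A) is also solid. -/
/-- A set in a vector lattice is solid if `|x| ≤ |y|` and `y ∈ S` imply `x ∈ S`. -/
def IsSolidSet {E : Type*} [Lattice E] [AddCommGroup E] (S : Set E) : Prop :=
  ∀ ⦃x y : E⦄, |x| ≤ |y| → y ∈ S → x ∈ S

/-- The balanced convex hull (absolutely convex hull) of a set in a real vector space:
all combinations `∑ λᵢ xᵢ` with `xᵢ ∈ A` and `∑ |λᵢ| ≤ 1`. -/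
def balConvHull {X : Type*} [AddCommGroup X] [Module ℝ X] (A : Set X) : Set X :=
  {x | ∃ (n : ℕ) (c : Fin n → ℝ) (v : Fin n → X),
    (∀ i, v i ∈ A) ∧ (∑ i, |c i|) ≤ 1 ∧ x = ∑ i, c i • v i}

set_option linter.unusedSectionVars false

section Aux

variable {E : Type*} [Lattice E] [AddCommGroup E] [Module ℝ E]
    [CovariantClass E E (· + ·) (· ≤ ·)] [PosSMulMono ℝ E]

lemma aux_smul_sup_pos {r : ℝ} (hr : 0 < r) (a b : E) :
    r • (a ⊔ b) = (r • a) ⊔ (r • b) := by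
  apply le_antisymm
  · have h : a ⊔ b ≤ r⁻¹ • ((r • a) ⊔ (r • b)) := by
      refine sup_le ?_ ?_
      · have := smul_le_smul_of_nonneg_left (le_sup_left : r • a ≤ (r • a) ⊔ (r • b))
          (inv_nonneg.mpr hr.le)
        rwa [smul_smul, inv_mul_cancel₀ hr.ne', one_smul] at this
      · have := smul_le_smul_of_nonneg_left (le_sup_right : r • b ≤ (r • a) ⊔ (r • b))
          (inv_nonneg.mpr hr.le)
        rwa [smul_smul, inv_mul_cancel₀ hr.ne', one_smul] at this
    have := smul_le_smul_of_nonneg_left h hr.le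
    rwa [smul_smul, mul_inv_cancel₀ hr.ne', one_smul] at this
  · exact sup_le (smul_le_smul_of_nonneg_left le_sup_left hr.le)
      (smul_le_smul_of_nonneg_left le_sup_right hr.le)

lemma aux_abs_smul_nonneg {r : ℝ} (hr : 0 ≤ r) (a : E) : |r • a| = r • |a| := by
  rcases hr.lt_or_eq with h | h
  · rw [abs, abs, ← smul_neg, aux_smul_sup_pos h]
  · rw [← h, zero_smul, zero_smul, abs_zero]

lemma aux_abs_smul (r : ℝ) (a : E) : |r • a| = |r| • |a| := by
  rcases le_or_gt 0 r with h | h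
  · rw [abs_of_nonneg h, aux_abs_smul_nonneg h]
  · rw [abs_of_neg h, ← abs_neg, ← neg_smul, aux_abs_smul_nonneg (by linarith)]

/-- Binary Riesz decomposition. -/
lemma aux_riesz_two {x b c : E} (hb : 0 ≤ b) (hc : 0 ≤ c) (h : |x| ≤ b + c) :
    ∃ x₁ x₂ : E, x = x₁ + x₂ ∧ |x₁| ≤ b ∧ |x₂| ≤ c := by
  have hx1 : x ≤ b + c := (le_abs_self x).trans h
  have hx2 : -x ≤ b + c := (neg_le_abs x).trans h
  set x₁ : E := (x ⊔ -b) ⊓ b with hx₁def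
  have hnb : -b ≤ x₁ := le_inf le_sup_right ((neg_nonpos.mpr hb).trans hb)
  have hub : x₁ ≤ b := inf_le_right
  refine ⟨x₁, x - x₁, by abel, abs_le'.mpr ⟨hub, neg_le.mpr hnb⟩, abs_le'.mpr ⟨?_, ?_⟩⟩
  · -- x - x₁ ≤ c
    have h1 : x - c ≤ x₁ := by
      refine le_inf ((sub_le_self x hc).trans le_sup_left) ?_
      exact sub_le_iff_le_add.mpr hx1
    calc x - x₁ ≤ x - (x - c) := sub_le_sub_left h1 x
      _ = c := by abel
  · -- -(x - x₁) ≤ c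
    have h2 : -(c + x) ≤ b := by
      have := sub_le_iff_le_add.mpr hx2
      calc -(c + x) = -x - c := by abel
        _ ≤ b := this
    have h3 : x₁ ≤ c + x :=
      inf_le_left.trans (sup_le (le_add_of_nonneg_left hc) (neg_le.mpr h2))
    calc -(x - x₁) = x₁ - x := by abel
      _ ≤ c := sub_le_iff_le_add.mpr h3

lemma aux_sum_nonneg : ∀ (n : ℕ) (b : Fin n → E), (∀ i, 0 ≤ b i) → (0:E) ≤ ∑ i, b i := by
  intro n
  induction n with
  | zero => intro b hb; simp
  | succ n ih =>
    intro b hb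
    rw [Fin.sum_univ_succ]
    exact add_nonneg (hb 0) (ih (fun i => b i.succ) fun i => hb i.succ)

lemma aux_abs_add (a b : E) : |a + b| ≤ |a| + |b| :=
  abs_le'.mpr ⟨add_le_add (le_abs_self a) (le_abs_self b), by
    rw [neg_add]; exact add_le_add (neg_le_abs a) (neg_le_abs b)⟩

lemma aux_abs_sum : ∀ (n : ℕ) (g : Fin n → E), |∑ i, g i| ≤ ∑ i, |g i| := by
  intro n
  induction n with
  | zero => intro g; simp
  | succ n ih =>
    intro g
    rw [Fin.sum_univ_succ, Fin.sum_univ_succ (f := fun i => |g i|)]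
    exact (aux_abs_add _ _).trans (add_le_add_right (ih fun i => g i.succ) _)

/-- Finite Riesz decomposition. -/
lemma aux_riesz_fin : ∀ (n : ℕ) (b : Fin n → E), (∀ i, 0 ≤ b i) → ∀ x : E,
    |x| ≤ ∑ i, b i → ∃ f : Fin n → E, (∀ i, |f i| ≤ b i) ∧ x = ∑ i, f i := by
  intro n
  induction n with
  | zero =>
    intro b hb x hx
    have : x = 0 := by
      have h0 : |x| ≤ 0 := by simpa using hx
      exact le_antisymm ((le_abs_self x).trans h0)
        (neg_nonpos.mp ((neg_le_abs x).trans h0))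
    exact ⟨fun i => i.elim0, fun i => i.elim0, by simpa using this⟩
  | succ n ih =>
    intro b hb x hx
    rw [Fin.sum_univ_succ] at hx
    obtain ⟨x₁, x₂, hsum, h1, h2⟩ := aux_riesz_two (hb 0)
      (aux_sum_nonneg n (fun i => b i.succ) fun i => hb i.succ) hx
    obtain ⟨g, hg, hgs⟩ := ih (fun i => b i.succ) (fun i => hb i.succ) x₂ h2
    refine ⟨Fin.cases x₁ g, fun i => ?_, ?_⟩
    · induction i using Fin.cases with
      | zero => simpa using h1
      | succ j => simpa using hg j
    · rw [Fin.sum_univ_succ]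
      simpa using hsum.trans (by rw [hgs])

end Aux

theorem isSolid_balConvHull {E : Type*} [Lattice E] [AddCommGroup E] [Module ℝ E]
    [CovariantClass E E (· + ·) (· ≤ ·)] [PosSMulMono ℝ E]
    (A : Set E) (hA : IsSolidSet A) : IsSolidSet (balConvHull A) := by
  rintro x y hxy ⟨n, c, v, hv, hc, rfl⟩
  have hxb : |x| ≤ ∑ i, |c i| • |v i| := by
    refine hxy.trans ?_
    calc |∑ i, c i • v i| ≤ ∑ i, |c i • v i| := aux_abs_sum n _
      _ = ∑ i, |c i| • |v i| := by simp_rw [aux_abs_smul]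
  obtain ⟨f, hf, hfs⟩ := aux_riesz_fin n (fun i => |c i| • |v i|)
    (fun i => smul_nonneg (abs_nonneg (c i)) (abs_nonneg (v i))) x hxb
  refine ⟨n, fun i => |c i|, fun i => if h : c i = 0 then v i else |c i|⁻¹ • f i, ?_, ?_, ?_⟩
  · intro i
    by_cases h : c i = 0
    · simpa [h] using hv i
    · simp only [dif_neg h]
      have hpos : (0:ℝ) < |c i| := abs_pos.mpr h
      refine hA ?_ (hv i)
      rw [aux_abs_smul]
      calc |(|c i|⁻¹)| • |f i| = |c i|⁻¹ • |f i| := by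
            rw [abs_of_nonneg (inv_nonneg.mpr hpos.le)]
        _ ≤ |c i|⁻¹ • (|c i| • |v i|) :=
            smul_le_smul_of_nonneg_left (hf i) (inv_nonneg.mpr hpos.le)
        _ = |v i| := by rw [smul_smul, inv_mul_cancel₀ hpos.ne', one_smul]
  · simpa [abs_abs] using hc
  · rw [hfs]
    refine Finset.sum_congr rfl fun i _ => ?_
    by_cases h : c i = 0
    · have h0 : |f i| ≤ 0 := by simpa [h] using hf i
      have hfz : f i = 0 := le_antisymm ((le_abs_self _).trans h0)
        (neg_nonpos.mp ((neg_le_abs _).trans h0))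
      simp [h, hfz]
    · show f i = |c i| • if h : c i = 0 then v i else |c i|⁻¹ • f i
      rw [dif_neg h, smul_smul, mul_inv_cancel₀ (abs_ne_zero.mpr h), one_smul]
end

section
/- Let E be a vector lattice (Riesz space) over the reals, let p be a Riesz seminorm on E, and let x₀ ∈ E with x₀ ≥ 0. Then there exists a positive linear functional f : E → ℝ such that f(x₀) = p(x₀) and |f(x)| ≤ p(x) for every x ∈ E. -/
theorem exists_positive_functional_of_riesz_seminorm {E : Type*} [Lattice E] [AddCommGroup E]
    [Module ℝ E] [CovariantClass E E (· + ·) (· ≤ ·)] [PosSMulMono ℝ E]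
    (p : E → ℝ)
    (hadd : ∀ x y : E, p (x + y) ≤ p x + p y)
    (hsmul : ∀ (a : ℝ) (x : E), p (a • x) = |a| * p x)
    (hmono : ∀ x y : E, |x| ≤ |y| → p x ≤ p y)
    (x₀ : E) (hx₀ : 0 ≤ x₀) :
    ∃ f : E →ₗ[ℝ] ℝ, (∀ x : E, 0 ≤ x → 0 ≤ f x) ∧ f x₀ = p x₀ ∧ ∀ x : E, |f x| ≤ p x := by
  -- basic facts about p
  have hp0 : p 0 = 0 := by
    have := hsmul 0 0
    simpa using this
  have hpnonneg : ∀ x : E, 0 ≤ p x := by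
    intro x
    have h1 : p 0 ≤ p x + p (-x) := by
      have := hadd x (-x)
      simpa using this
    have h2 : p (-x) = p x := by
      have := hsmul (-1) x
      simpa using this
    rw [hp0, h2] at h1
    linarith
  -- smul and positive part commute for positive scalars
  have smul_sup : ∀ c : ℝ, 0 < c → ∀ a b : E, c • (a ⊔ b) = (c • a) ⊔ (c • b) := by
    intro c hc a b
    apply le_antisymm
    · have h : a ⊔ b ≤ c⁻¹ • ((c • a) ⊔ (c • b)) := by
        apply sup_le
        · have : c • a ≤ (c • a) ⊔ (c • b) := le_sup_left
          have := smul_le_smul_of_nonneg_left this (le_of_lt (inv_pos.2 hc))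
          rwa [inv_smul_smul₀ hc.ne'] at this
        · have : c • b ≤ (c • a) ⊔ (c • b) := le_sup_right
          have := smul_le_smul_of_nonneg_left this (le_of_lt (inv_pos.2 hc))
          rwa [inv_smul_smul₀ hc.ne'] at this
      have := smul_le_smul_of_nonneg_left h hc.le
      rwa [smul_inv_smul₀ hc.ne'] at this
    · apply sup_le
      · exact smul_le_smul_of_nonneg_left le_sup_left hc.le
      · exact smul_le_smul_of_nonneg_left le_sup_right hc.le
  have posPart_smul : ∀ c : ℝ, 0 < c → ∀ x : E, (c • x)⁺ = c • x⁺ := by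
    intro c hc x
    rw [posPart_def, posPart_def, smul_sup c hc, smul_zero]
  -- the sublinear functional N x = p (x⁺)
  set N : E → ℝ := fun x => p x⁺ with hN
  have hNhom : ∀ c : ℝ, 0 < c → ∀ x : E, N (c • x) = c * N x := by
    intro c hc x
    simp only [hN]
    rw [posPart_smul c hc, hsmul, abs_of_pos hc]
  have hNadd : ∀ x y : E, N (x + y) ≤ N x + N y := by
    intro x y
    have h1 : (x + y)⁺ ≤ x⁺ + y⁺ := by
      rw [posPart_def]
      apply sup_le
      · exact add_le_add (le_posPart x) (le_posPart y)
      · exact add_nonneg (posPart_nonneg x) (posPart_nonneg y)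
    have h2 : |(x + y)⁺| ≤ |x⁺ + y⁺| := by
      rw [abs_of_nonneg (posPart_nonneg _),
        abs_of_nonneg (add_nonneg (posPart_nonneg x) (posPart_nonneg y))]
      exact h1
    calc p (x + y)⁺ ≤ p (x⁺ + y⁺) := hmono _ _ h2
      _ ≤ p x⁺ + p y⁺ := hadd _ _
  -- the partial linear map on span {x₀}
  have hker : ∀ c : ℝ, c • x₀ = 0 → c • (p x₀) = 0 := by
    intro c hc
    rcases eq_or_ne c 0 with h | h
    · simp [h]
    · have hx0 : x₀ = 0 := by
        have := congrArg (fun z => c⁻¹ • z) hc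
        simpa [inv_smul_smul₀ h] using this
      simp [hx0, hp0]
  set f₀ : E →ₗ.[ℝ] ℝ := LinearPMap.mkSpanSingleton' x₀ (p x₀) hker with hf₀
  have hdom : ∀ y : f₀.domain, f₀ y ≤ N (y : E) := by
    rintro ⟨y, hy⟩
    rcases Submodule.mem_span_singleton.1 hy with ⟨c, rfl⟩
    rw [LinearPMap.mkSpanSingleton'_apply]
    simp only [hN, smul_eq_mul, RingHom.id_apply]
    rcases le_or_gt 0 c with h | h
    · rcases h.eq_or_lt with h0 | hpos
      · simp [← h0, hp0]
      · rw [posPart_smul c hpos, hsmul, abs_of_pos hpos,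
          posPart_eq_self.2 hx₀]
    · have hneg : c • x₀ ≤ 0 := by
        have h1 : (0:ℝ) ≤ -c := by linarith
        have h2 : 0 ≤ (-c) • x₀ := smul_nonneg h1 hx₀
        have h3 := neg_nonpos.2 h2
        rwa [neg_smul, neg_neg] at h3
      rw [posPart_eq_zero.2 hneg, hp0]
      have := hpnonneg x₀
      nlinarith
  obtain ⟨g, hg1, hg2⟩ := exists_extension_of_le_sublinear f₀ N hNhom hNadd hdom
  refine ⟨g, ?_, ?_, ?_⟩
  · intro x hx
    have := hg2 (-x)
    have hnp : (-x)⁺ = 0 := posPart_eq_zero.2 (neg_nonpos.2 hx)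
    rw [hN] at this
    simp only [hnp, hp0] at this
    have : g (-x) ≤ 0 := this
    rw [map_neg] at this
    linarith
  · have hx₀mem : x₀ ∈ f₀.domain := by
      rw [hf₀, LinearPMap.domain_mkSpanSingleton]
      exact Submodule.mem_span_singleton_self x₀
    have := hg1 ⟨x₀, hx₀mem⟩
    rw [this]
    exact LinearPMap.mkSpanSingleton'_apply_self x₀ (p x₀) hker _
  · intro x
    rw [abs_le]
    constructor
    · have h1 := hg2 (-x)
      rw [map_neg] at h1
      have h2 : N (-x) ≤ p x := by
        apply hmono
        rw [abs_of_nonneg (posPart_nonneg _)]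
        calc (-x)⁺ = (-x) ⊔ 0 := posPart_def _
          _ ≤ |x| ⊔ 0 := sup_le_sup_right (neg_le_abs x) 0
          _ = |x| := sup_eq_left.2 (abs_nonneg x)
        -- need |x| ≤ ||x||, but ||x|| = |x|
      linarith
    · have h1 := hg2 x
      have h2 : N x ≤ p x := by
        apply hmono
        rw [abs_of_nonneg (posPart_nonneg _)]
        calc x⁺ = x ⊔ 0 := posPart_def _
          _ ≤ |x| ⊔ 0 := sup_le_sup_right (le_abs_self x) 0
          _ = |x| := sup_eq_left.2 (abs_nonneg x)
      linarith
end
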